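/- Let (V,⊗,I) be a finitely cocomplete symmetric monoidal closed category equipped with a cocategory interval, and let I^• denote the induced cosimplicial object. For any cosimplicial object X^• in V, giving a map of cosimplicial objects f^• : I^• → X^• is equivalent to giving maps f^0 : I → X^0 and f^1 : I^1 → X^1 satisfying f^1 d^0 = d^0 f^0, f^1 d^1 = d^1 f^0 and f^0 p = s^0 f^1, together with a map f^2 : I^2 → X^2 such that f^2 i^0 = d^0 f^1, f^2 i^1 = d^2 f^1 and f^2 c = d^1 f^1. In particular, two maps of cosimplicial objects f^•, g^• : I^• → X^• are equal if and only if f^0 = g^0 and f^1 = g^1. -/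

import Mathlib

open CategoryTheory MonoidalCategory Limits Simplicial

universe v u

/-- A cocategory interval in a monoidal category `V`. -/
structure CocategoryInterval (V : Type u) [Category.{v} V] [MonoidalCategory V] where
  I1 : V
  d0 : 𝟙_ V ⟶ I1
  d1 : 𝟙_ V ⟶ I1
  p : I1 ⟶ 𝟙_ V
  d0_p : d0 ≫ p = 𝟙 (𝟙_ V)
  d1_p : d1 ≫ p = 𝟙 (𝟙_ V)
  I2 : V
  i0 : I1 ⟶ I2
  i1 : I1 ⟶ I2
  isPushout2 : IsPushout d1 d0 i0 i1
  c : I1 ⟶ I2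
  c_d0 : d0 ≫ c = d0 ≫ i0
  c_d1 : d1 ≫ c = d1 ≫ i1
  s0 : I2 ⟶ I1
  i0_s0 : i0 ≫ s0 = 𝟙 I1
  i1_s0 : i1 ≫ s0 = p ≫ d1
  s1 : I2 ⟶ I1
  i1_s1 : i1 ≫ s1 = 𝟙 I1
  i0_s1 : i0 ≫ s1 = p ≫ d0
  counit0 : c ≫ s0 = 𝟙 I1
  counit1 : c ≫ s1 = 𝟙 I1
  I3 : V
  j01 : I2 ⟶ I3
  k2 : I1 ⟶ I3
  isPushout3 : IsPushout (d1 ≫ i1) d0 j01 k2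
  j12 : I2 ⟶ I3
  i0_j12 : i0 ≫ j12 = i1 ≫ j01
  i1_j12 : i1 ≫ j12 = k2
  c₁ : I2 ⟶ I3
  i0_c₁ : i0 ≫ c₁ = c ≫ j01
  i1_c₁ : i1 ≫ c₁ = k2
  c₂ : I2 ⟶ I3
  i0_c₂ : i0 ≫ c₂ = i0 ≫ j01
  i1_c₂ : i1 ≫ c₂ = c ≫ j12
  coassoc : c ≫ c₁ = c ≫ c₂

namespace CocategoryInterval

/-- The last-vertex map `[0] ⟶ [n]`. -/
def lastVertex (n : ℕ) : (⦋0⦌ : SimplexCategory) ⟶ ⦋n⦌ :=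
  SimplexCategory.const _ _ (Fin.last n)

/-- The first-vertex map `[0] ⟶ [1]`. -/
def firstVertex : (⦋0⦌ : SimplexCategory) ⟶ ⦋1⦌ :=
  SimplexCategory.const _ _ 0

/-- The inclusion `[n] ⟶ [n+1]` of the initial segment, i.e. the last coface. -/
def initSegment (n : ℕ) : (⦋n⦌ : SimplexCategory) ⟶ ⦋n + 1⦌ :=
  SimplexCategory.δ (Fin.last (n + 1))

/-- The inclusion `[1] ⟶ [n+1]` of the last edge, `0 ↦ n`, `1 ↦ n+1`. -/
def lastEdge (n : ℕ) : (⦋1⦌ : SimplexCategory) ⟶ ⦋n + 1⦌ :=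
  SimplexCategory.mkHom
    ⟨fun i => ⟨i + n, by omega⟩, fun i j h => by
      simp only [Fin.mk_le_mk]
      exact Nat.add_le_add_right h n⟩

variable {V : Type u} [Category.{v} V] [MonoidalCategory V]

/-- `W` realizes the cosimplicial object `I^•` induced by the cocategory interval `J`:
in degrees `≤ 2` it is given by `𝟙_V`, `I¹` and `I²` with the cofaces and codegeneracies of the
cocategory interval (`d⁰ = i⁰`, `d¹ = c`, `d² = i¹` in degree `2`), and each `W^{n+1}` (`n ≥ 1`)
is the amalgam `W^n ⊔_{W^0} W^1`, glued along the last vertex of `W^n` and the first vertex of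
`W^1`. -/
structure Realization (J : CocategoryInterval V) (W : CosimplicialObject V) where
  e0 : W ^⦋0⦌ ≅ 𝟙_ V
  e1 : W ^⦋1⦌ ≅ J.I1
  e2 : W ^⦋2⦌ ≅ J.I2
  compat_d0 : W.δ (0 : Fin 2) = e0.hom ≫ J.d0 ≫ e1.inv
  compat_d1 : W.δ (1 : Fin 2) = e0.hom ≫ J.d1 ≫ e1.inv
  compat_p : W.σ (0 : Fin 1) = e1.hom ≫ J.p ≫ e0.inv
  compat_i0 : W.δ (0 : Fin 3) = e1.hom ≫ J.i0 ≫ e2.inv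
  compat_c : W.δ (1 : Fin 3) = e1.hom ≫ J.c ≫ e2.inv
  compat_i1 : W.δ (2 : Fin 3) = e1.hom ≫ J.i1 ≫ e2.inv
  amalgam : ∀ n : ℕ, 1 ≤ n →
    IsPushout (W.map (lastVertex n)) (W.map firstVertex)
      (W.map (initSegment n)) (W.map (lastEdge n))

end CocategoryInterval

open CocategoryInterval

namespace GrayAux
open CocategoryInterval SimplexCategory

section SimplexLemmas

lemma initSegment_apply (n : ℕ) (i : Fin (n+1)) :
    ((initSegment n).toOrderHom i : ℕ) = (i : ℕ) := by
  show ((SimplexCategory.δ (Fin.last (n+1))).toOrderHom i : ℕ) = _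
  simp [SimplexCategory.δ, Fin.succAbove_last]

lemma lastEdge_apply (n : ℕ) (i : Fin 2) :
    ((lastEdge n).toOrderHom i : ℕ) = i + n := rfl

lemma lastVertex_apply (n : ℕ) (i : Fin 1) :
    ((lastVertex n).toOrderHom i : ℕ) = n := rfl

lemma const_apply' (m n : ℕ) (k : Fin (n+1)) (i : Fin (m+1)) :
    ((SimplexCategory.const ⦋m⦌ ⦋n⦌ k).toOrderHom i : ℕ) = (k : ℕ) := rfl

lemma lastVertex_zero : lastVertex 0 = 𝟙 (⦋0⦌ : SimplexCategory) := by
  apply SimplexCategory.Hom.ext; apply OrderHom.ext; funext i; fin_cases i; decide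

lemma lastVertex_one : lastVertex 1 = SimplexCategory.δ (0 : Fin 2) := by
  apply SimplexCategory.Hom.ext; apply OrderHom.ext; funext i; fin_cases i; decide

lemma firstVertex_eq : firstVertex = SimplexCategory.δ (1 : Fin 2) := by
  apply SimplexCategory.Hom.ext; apply OrderHom.ext; funext i; fin_cases i; decide

lemma initSegment_one : initSegment 1 = SimplexCategory.δ (2 : Fin 3) := by
  apply SimplexCategory.Hom.ext; apply OrderHom.ext; funext i; fin_cases i <;> decide

lemma lastEdge_one : lastEdge 1 = SimplexCategory.δ (0 : Fin 3) := by
  apply SimplexCategory.Hom.ext; apply OrderHom.ext; funext i; fin_cases i <;> decide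

lemma pushout_vertex (n : ℕ) :
    lastVertex n ≫ initSegment n = firstVertex ≫ lastEdge n := by
  apply SimplexCategory.Hom.ext; apply OrderHom.ext; funext i
  apply Fin.ext
  simp only [comp_toOrderHom, OrderHom.comp_coe, Function.comp_apply]
  rw [initSegment_apply]
  show ((lastVertex n).toOrderHom i : ℕ)
      = ((lastEdge n).toOrderHom (firstVertex.toOrderHom i) : ℕ)
  rw [lastVertex_apply]
  have h0 : (firstVertex.toOrderHom i : ℕ) = 0 := rfl
  have := lastEdge_apply n (firstVertex.toOrderHom i)
  omega

lemma lastVertex_succ (n : ℕ) : lastVertex (n+1) = lastVertex 1 ≫ lastEdge n := by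
  apply SimplexCategory.Hom.ext; apply OrderHom.ext; funext i
  apply Fin.ext
  simp only [comp_toOrderHom, OrderHom.comp_coe, Function.comp_apply]
  rw [lastVertex_apply]
  have h0 : (((lastVertex 1).toOrderHom : Fin 1 →o Fin 2) i : ℕ) = 1 := rfl
  have := lastEdge_apply n ((lastVertex 1).toOrderHom i)
  omega

lemma const_factor_init (n : ℕ) (k : Fin (n+2)) (h : (k : ℕ) ≤ n) :
    SimplexCategory.const ⦋0⦌ ⦋n+1⦌ k
      = SimplexCategory.const ⦋0⦌ ⦋n⦌ ⟨(k : ℕ), by simp only [SimplexCategory.len_mk]; omega⟩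
        ≫ initSegment n := by
  apply SimplexCategory.Hom.ext; apply OrderHom.ext; funext i
  apply Fin.ext
  simp only [comp_toOrderHom, OrderHom.comp_coe, Function.comp_apply]
  rw [initSegment_apply, const_apply', const_apply']

lemma factor_init {m n : ℕ} (φ : (⦋m⦌ : SimplexCategory) ⟶ ⦋n+1⦌)
    (h : ∀ i, (φ.toOrderHom i : ℕ) ≤ n) :
    ∃ ψ : (⦋m⦌ : SimplexCategory) ⟶ ⦋n⦌, φ = ψ ≫ initSegment n := by
  refine ⟨SimplexCategory.Hom.mk ⟨fun i => ⟨(φ.toOrderHom i : ℕ), by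
      have := h i; simp only [SimplexCategory.len_mk]; omega⟩,
    fun i j hij => by simpa using φ.toOrderHom.monotone hij⟩, ?_⟩
  apply SimplexCategory.Hom.ext; apply OrderHom.ext; funext i
  apply Fin.ext
  simp only [comp_toOrderHom, OrderHom.comp_coe, Function.comp_apply]
  rw [initSegment_apply]
  rfl

lemma const_factor (m n : ℕ) (k : Fin (n+1)) :
    (SimplexCategory.const ⦋m⦌ ⦋n⦌ k : (⦋m⦌:SimplexCategory) ⟶ ⦋n⦌) =
      SimplexCategory.const ⦋m⦌ ⦋0⦌ 0 ≫ SimplexCategory.const ⦋0⦌ ⦋n⦌ k := by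
  apply SimplexCategory.Hom.ext; apply OrderHom.ext; funext i; rfl

lemma sigma_zero : (SimplexCategory.const ⦋1⦌ ⦋0⦌ 0 : (⦋1⦌:SimplexCategory) ⟶ ⦋0⦌)
    = SimplexCategory.σ (0 : Fin 1) := by
  apply SimplexCategory.Hom.ext; apply OrderHom.ext; funext i; fin_cases i <;> decide

lemma eq_const {n : ℕ} (φ : (⦋1⦌ : SimplexCategory) ⟶ ⦋n⦌)
    (h : φ.toOrderHom 0 = φ.toOrderHom 1) :
    φ = SimplexCategory.const ⦋1⦌ ⦋n⦌ (φ.toOrderHom 1) := by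
  apply SimplexCategory.Hom.ext; apply OrderHom.ext; funext i
  fin_cases i
  · exact h
  · rfl

lemma eq_lastEdge {m : ℕ} (φ : (⦋1⦌ : SimplexCategory) ⟶ ⦋m+1⦌)
    (h0 : (φ.toOrderHom 0 : ℕ) = m) (h1 : (φ.toOrderHom 1 : ℕ) = m+1) :
    φ = lastEdge m := by
  apply SimplexCategory.Hom.ext; apply OrderHom.ext; funext i
  apply Fin.ext
  fin_cases i <;> simp only [Fin.zero_eta, Fin.mk_one, Fin.isValue]
  · rw [h0]; have := lastEdge_apply m 0; omega
  · rw [h1]; have := lastEdge_apply m 1; omega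

/-- the triangle `⦋2⦌ ⟶ ⦋m+2⦌`, `0 ↦ a`, `1 ↦ m+1`, `2 ↦ m+2`. -/
def tri (m a : ℕ) (ha : a ≤ m) : (⦋2⦌ : SimplexCategory) ⟶ ⦋m+2⦌ :=
  SimplexCategory.Hom.mk
    ⟨fun i => if (i : ℕ) = 0 then ⟨a, by simp only [SimplexCategory.len_mk]; omega⟩
        else ⟨m + (i : ℕ), by simp only [SimplexCategory.len_mk]; omega⟩,
     by
      intro i j hij
      fin_cases i <;> fin_cases j <;>
        simp_all [Fin.le_def] <;> omega⟩

lemma tri_apply (m a : ℕ) (ha : a ≤ m) (i : Fin 3) :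
    ((tri m a ha).toOrderHom i : ℕ) = if (i : ℕ) = 0 then a else m + (i : ℕ) := by
  fin_cases i <;> rfl

lemma delta1_apply (i : Fin 2) :
    (((SimplexCategory.δ (1 : Fin 3)).toOrderHom : Fin 2 →o Fin 3) i : ℕ)
      = if (i : ℕ) = 0 then 0 else 2 := by
  fin_cases i <;> decide

lemma long_edge_decomp {m : ℕ} (φ : (⦋1⦌ : SimplexCategory) ⟶ ⦋m+2⦌)
    (h1 : (φ.toOrderHom 1 : ℕ) = m+2) (h0 : (φ.toOrderHom 0 : ℕ) ≤ m) :
    φ = SimplexCategory.δ (1 : Fin 3) ≫ tri m (φ.toOrderHom 0 : ℕ) h0 := by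
  apply SimplexCategory.Hom.ext; apply OrderHom.ext; funext i
  apply Fin.ext
  simp only [comp_toOrderHom, OrderHom.comp_coe, Function.comp_apply]
  fin_cases i <;> simp only [Fin.zero_eta, Fin.mk_one, Fin.isValue]
  · rw [show ((SimplexCategory.δ (1 : Fin 3)).toOrderHom (0 : Fin 2)) = (0 : Fin 3) by decide]
    rw [tri_apply]
    simp
  · rw [show ((SimplexCategory.δ (1 : Fin 3)).toOrderHom (1 : Fin 2)) = (2 : Fin 3) by decide]
    rw [tri_apply, h1]
    simp

lemma tri_init_bound (m a : ℕ) (ha : a ≤ m) (i : Fin 2) :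
    (((initSegment 1 ≫ tri m a ha).toOrderHom : Fin 2 →o Fin (m+3)) i : ℕ) ≤ m + 1 := by
  simp only [comp_toOrderHom, OrderHom.comp_coe, Function.comp_apply]
  rw [show ((tri m a ha).toOrderHom ((initSegment 1).toOrderHom i) : ℕ)
        = if (((initSegment 1).toOrderHom i : Fin 3) : ℕ) = 0 then a
          else m + (((initSegment 1).toOrderHom i : Fin 3) : ℕ) from tri_apply m a ha _]
  have := initSegment_apply 1 i
  fin_cases i <;> simp_all <;> omega

lemma tri_last (m a : ℕ) (ha : a ≤ m) :
    lastEdge 1 ≫ tri m a ha = lastEdge (m+1) := by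
  apply SimplexCategory.Hom.ext; apply OrderHom.ext; funext i
  apply Fin.ext
  simp only [comp_toOrderHom, OrderHom.comp_coe, Function.comp_apply]
  rw [show ((tri m a ha).toOrderHom ((lastEdge 1).toOrderHom i) : ℕ)
        = if (((lastEdge 1).toOrderHom i : Fin 3) : ℕ) = 0 then a
          else m + (((lastEdge 1).toOrderHom i : Fin 3) : ℕ) from tri_apply m a ha _]
  have h1 := lastEdge_apply 1 i
  have h2 := lastEdge_apply (m+1) i
  fin_cases i <;> simp_all <;> omega

end SimplexLemmas

section Construction

variable {V : Type u} [Category.{v} V] [MonoidalCategory V]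

/-- the data of the truncated map `I^• ⟶ X^•`. -/
structure MapData (J : CocategoryInterval V) (W : CosimplicialObject V)
    (R : Realization J W) (X : CosimplicialObject V) where
  f0 : 𝟙_ V ⟶ X ^⦋0⦌
  f1 : J.I1 ⟶ X ^⦋1⦌
  f2 : J.I2 ⟶ X ^⦋2⦌
  hd0 : J.d0 ≫ f1 = f0 ≫ X.δ (0 : Fin 2)
  hd1 : J.d1 ≫ f1 = f0 ≫ X.δ (1 : Fin 2)
  hp : J.p ≫ f0 = f1 ≫ X.σ (0 : Fin 1)
  hi0 : J.i0 ≫ f2 = f1 ≫ X.δ (0 : Fin 3)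
  hi1 : J.i1 ≫ f2 = f1 ≫ X.δ (2 : Fin 3)
  hc : J.c ≫ f2 = f1 ≫ X.δ (1 : Fin 3)

variable {J : CocategoryInterval V} {W : CosimplicialObject V} {R : Realization J W}
  {X : CosimplicialObject V}

namespace MapData

lemma nat_first (D : MapData J W R X) :
    W.map firstVertex ≫ (R.e1.hom ≫ D.f1) = (R.e0.hom ≫ D.f0) ≫ X.map firstVertex := by
  rw [firstVertex_eq]
  show W.δ (1 : Fin 2) ≫ _ = _ ≫ X.δ (1 : Fin 2)
  rw [R.compat_d1]
  simp [D.hd1]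

lemma nat_lastV1 (D : MapData J W R X) :
    W.map (lastVertex 1) ≫ (R.e1.hom ≫ D.f1) = (R.e0.hom ≫ D.f0) ≫ X.map (lastVertex 1) := by
  rw [lastVertex_one]
  show W.δ (0 : Fin 2) ≫ _ = _ ≫ X.δ (0 : Fin 2)
  rw [R.compat_d0]
  simp [D.hd0]

/-- the components of the natural transformation, with the last-vertex compatibility. -/
noncomputable def Fc (D : MapData J W R X) :
    ∀ n : ℕ, {g : W.obj ⦋n⦌ ⟶ X.obj ⦋n⦌ //
      W.map (lastVertex n) ≫ g = (R.e0.hom ≫ D.f0) ≫ X.map (lastVertex n)} := fun n => match n with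
  | 0 => ⟨R.e0.hom ≫ D.f0, by rw [lastVertex_zero, show W.map (𝟙 ⦋0⦌) = 𝟙 _ from W.map_id _,
    show X.map (𝟙 ⦋0⦌) = 𝟙 _ from X.map_id _]; simp⟩
  | 1 => ⟨R.e1.hom ≫ D.f1, D.nat_lastV1⟩
  | (n+2) =>
    ⟨(R.amalgam (n+1) (by omega)).desc
        ((D.Fc (n+1)).1 ≫ X.map (initSegment (n+1)))
        ((R.e1.hom ≫ D.f1) ≫ X.map (lastEdge (n+1)))
        (by
          rw [← Category.assoc, ← Category.assoc, (D.Fc (n+1)).2, D.nat_first]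
          simp only [Category.assoc, ← X.map_comp, pushout_vertex]), by
      rw [lastVertex_succ (n+1), W.map_comp, Category.assoc,
        (R.amalgam (n+1) (by omega)).inr_desc, ← Category.assoc, D.nat_lastV1]
      simp only [Category.assoc, ← X.map_comp]⟩

lemma nat_init (D : MapData J W R X) (n : ℕ) :
    W.map (initSegment (n+1)) ≫ (D.Fc (n+2)).1
      = (D.Fc (n+1)).1 ≫ X.map (initSegment (n+1)) :=
  (R.amalgam (n+1) (by omega)).inl_desc _ _ _

lemma nat_last (D : MapData J W R X) (n : ℕ) :
    W.map (lastEdge (n+1)) ≫ (D.Fc (n+2)).1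
      = (D.Fc 1).1 ≫ X.map (lastEdge (n+1)) :=
  (R.amalgam (n+1) (by omega)).inr_desc _ _ _

lemma Fc_zero (D : MapData J W R X) : (D.Fc 0).1 = R.e0.hom ≫ D.f0 := rfl

lemma Fc_one (D : MapData J W R X) : (D.Fc 1).1 = R.e1.hom ≫ D.f1 := rfl

lemma Fc_two (D : MapData J W R X) : (D.Fc 2).1 = R.e2.hom ≫ D.f2 := by
  apply (R.amalgam 1 (by omega)).hom_ext
  · rw [D.nat_init 0, Fc_one, initSegment_one]
    show (R.e1.hom ≫ D.f1) ≫ X.δ (2 : Fin 3) = W.δ (2 : Fin 3) ≫ R.e2.hom ≫ D.f2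
    rw [R.compat_i1]
    simp [D.hi1]
  · rw [D.nat_last 0, Fc_one, lastEdge_one]
    show (R.e1.hom ≫ D.f1) ≫ X.δ (0 : Fin 3) = W.δ (0 : Fin 3) ≫ R.e2.hom ≫ D.f2
    rw [R.compat_i0]
    simp [D.hi0]

lemma nat_c (D : MapData J W R X) :
    W.map (SimplexCategory.δ (1 : Fin 3)) ≫ (D.Fc 2).1
      = (D.Fc 1).1 ≫ X.map (SimplexCategory.δ (1 : Fin 3)) := by
  rw [Fc_two, Fc_one]
  show W.δ (1 : Fin 3) ≫ R.e2.hom ≫ D.f2 = (R.e1.hom ≫ D.f1) ≫ X.δ (1 : Fin 3)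
  rw [R.compat_c]
  simp [D.hc]

lemma nat_sigma (D : MapData J W R X) :
    W.map (SimplexCategory.const ⦋1⦌ ⦋0⦌ 0) ≫ (D.Fc 0).1
      = (D.Fc 1).1 ≫ X.map (SimplexCategory.const ⦋1⦌ ⦋0⦌ 0) := by
  rw [Fc_zero, Fc_one, sigma_zero]
  show W.σ (0 : Fin 1) ≫ R.e0.hom ≫ D.f0 = (R.e1.hom ≫ D.f1) ≫ X.σ (0 : Fin 1)
  rw [R.compat_p]
  simp [D.hp]

/-- naturality at vertex maps. -/
lemma nat_vertex (D : MapData J W R X) :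
    ∀ (n : ℕ) (k : Fin (n+1)),
      W.map (SimplexCategory.const ⦋0⦌ ⦋n⦌ k) ≫ (D.Fc n).1
        = (D.Fc 0).1 ≫ X.map (SimplexCategory.const ⦋0⦌ ⦋n⦌ k) := fun n k => match n, k with
  | 0, k => by
    have hk : k = 0 := by
      apply Fin.ext
      have := Fin.is_le k
      omega
    subst hk
    rw [SimplexCategory.const_eq_id]
    rw [show W.map (𝟙 ⦋0⦌) = 𝟙 _ from W.map_id _, show X.map (𝟙 ⦋0⦌) = 𝟙 _ from X.map_id _]
    simp
  | 1, k => by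
    match k, Fin.is_le k with
    | ⟨0, _⟩, _ =>
      have : (SimplexCategory.const ⦋0⦌ ⦋1⦌ (⟨0, by omega⟩ : Fin 2)) = firstVertex := rfl
      rw [this, Fc_zero, Fc_one]
      exact D.nat_first
    | ⟨1, _⟩, _ =>
      have : (SimplexCategory.const ⦋0⦌ ⦋1⦌ (⟨1, by omega⟩ : Fin 2)) = lastVertex 1 := rfl
      rw [this]
      exact (D.Fc 1).2
  | (n+2), k => by
    by_cases hk : (k : ℕ) ≤ n + 1
    · rw [const_factor_init (n+1) k hk, W.map_comp, X.map_comp, Category.assoc,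
        D.nat_init n, ← Category.assoc, nat_vertex D (n+1) _, Category.assoc]
    · have hk2 : (k : ℕ) = n + 2 := by have := Fin.is_le k; omega
      have : SimplexCategory.const ⦋0⦌ ⦋n+2⦌ k = lastVertex (n+2) := by
        unfold lastVertex
        congr 1
        apply Fin.ext
        simp [hk2]
      rw [this]
      exact (D.Fc (n+2)).2

lemma nat_comp (D : MapData J W R X) {a b c : ℕ}
    (φ : (⦋a⦌ : SimplexCategory) ⟶ ⦋b⦌) (ψ : (⦋b⦌ : SimplexCategory) ⟶ ⦋c⦌)
    (hφ : W.map φ ≫ (D.Fc b).1 = (D.Fc a).1 ≫ X.map φ)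
    (hψ : W.map ψ ≫ (D.Fc c).1 = (D.Fc b).1 ≫ X.map ψ) :
    W.map (φ ≫ ψ) ≫ (D.Fc c).1 = (D.Fc a).1 ≫ X.map (φ ≫ ψ) := by
  rw [W.map_comp, X.map_comp, Category.assoc, hψ, ← Category.assoc, hφ, Category.assoc]

/-- naturality at maps out of `⦋1⦌`. -/
lemma nat_hom1 (D : MapData J W R X) :
    ∀ (n : ℕ) (φ : (⦋1⦌ : SimplexCategory) ⟶ ⦋n⦌),
      W.map φ ≫ (D.Fc n).1 = (D.Fc 1).1 ≫ X.map φ := by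
  intro n
  induction n using Nat.strong_induction_on with
  | _ n IH =>
  intro φ
  by_cases hconst : φ.toOrderHom 0 = φ.toOrderHom 1
  · rw [eq_const φ hconst, const_factor]
    exact D.nat_comp _ _ D.nat_sigma (D.nat_vertex n _)
  · have hmono : (φ.toOrderHom 0 : ℕ) ≤ (φ.toOrderHom 1 : ℕ) :=
      φ.toOrderHom.monotone (by decide)
    have hlt : (φ.toOrderHom 0 : ℕ) < (φ.toOrderHom 1 : ℕ) := by
      rcases lt_or_eq_of_le hmono with h | h
      · exact h
      · exact absurd (Fin.ext h) hconst
    match n with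
    | 0 =>
      have b0 : (φ.toOrderHom 0 : ℕ) ≤ 0 := Fin.is_le _
      have b1 : (φ.toOrderHom 1 : ℕ) ≤ 0 := Fin.is_le _
      omega
    | 1 =>
      have b0 : (φ.toOrderHom 0 : ℕ) ≤ 1 := Fin.is_le _
      have b1 : (φ.toOrderHom 1 : ℕ) ≤ 1 := Fin.is_le _
      have hφ : φ = 𝟙 (⦋1⦌ : SimplexCategory) := by
        apply SimplexCategory.Hom.ext; apply OrderHom.ext; funext i
        apply Fin.ext
        simp only [SimplexCategory.id_toOrderHom, OrderHom.id_coe, id_eq]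
        fin_cases i <;> simp only [Fin.zero_eta, Fin.mk_one, Fin.isValue] <;> omega
      rw [hφ]
      rw [show W.map (𝟙 ⦋1⦌) = 𝟙 _ from W.map_id _, show X.map (𝟙 ⦋1⦌) = 𝟙 _ from X.map_id _,
        Category.id_comp, Category.comp_id]
    | (m+2) =>
      have hle1 : (φ.toOrderHom 1 : ℕ) ≤ m + 2 := Fin.is_le _
      by_cases hb : (φ.toOrderHom 1 : ℕ) ≤ m + 1
      · -- factor through the initial segment
        obtain ⟨ψ, hψ⟩ := factor_init φ (by
          intro i
          fin_cases i <;> simp only [Fin.zero_eta, Fin.mk_one, Fin.isValue] <;> omega)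
        rw [hψ]
        exact D.nat_comp _ _ (IH (m+1) (by omega) ψ) (D.nat_init m)
      · have hb2 : (φ.toOrderHom 1 : ℕ) = m + 2 := by omega
        by_cases ha : (φ.toOrderHom 0 : ℕ) = m + 1
        · rw [eq_lastEdge φ ha hb2]
          exact D.nat_last m
        · have ha2 : (φ.toOrderHom 0 : ℕ) ≤ m := by omega
          rw [long_edge_decomp φ hb2 ha2]
          refine D.nat_comp _ _ D.nat_c ?_
          -- naturality at the triangle, via the pushout presentation of W ⦋2⦌
          have htri : W.map (tri m _ ha2) ≫ (D.Fc (m+2)).1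
              = (D.Fc 2).1 ≫ X.map (tri m _ ha2) := by
            apply (R.amalgam 1 (by omega)).hom_ext
            · obtain ⟨ψ, hψ⟩ := factor_init (initSegment 1 ≫ tri m _ ha2)
                (tri_init_bound m _ ha2)
              rw [← Category.assoc, ← W.map_comp, hψ,
                D.nat_comp _ _ (IH (m+1) (by omega) ψ) (D.nat_init m), ← hψ,
                X.map_comp, ← Category.assoc, ← D.nat_init 0, Category.assoc]
            · rw [← Category.assoc, ← W.map_comp, tri_last, D.nat_last m,
                ← tri_last m _ ha2, X.map_comp, ← Category.assoc, ← D.nat_last 0,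
                Category.assoc]
          convert htri using 2

/-- naturality at all maps. -/
lemma nat_all (D : MapData J W R X) :
    ∀ (a b : ℕ) (φ : (⦋a⦌ : SimplexCategory) ⟶ ⦋b⦌),
      W.map φ ≫ (D.Fc b).1 = (D.Fc a).1 ≫ X.map φ := by
  intro a
  induction a using Nat.strong_induction_on with
  | _ a IH =>
  intro b φ
  match a with
  | 0 =>
    have : φ = SimplexCategory.const ⦋0⦌ ⦋b⦌ (φ.toOrderHom 0) := by
      apply SimplexCategory.Hom.ext; apply OrderHom.ext; funext i
      have hi : i = 0 := by
        apply Fin.ext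
        have := Fin.is_le i
        simp only [SimplexCategory.len_mk] at this ⊢
        omega
      rw [hi]
      rfl
    rw [this]
    exact D.nat_vertex b _
  | 1 => exact D.nat_hom1 b φ
  | (m+2) =>
    apply (R.amalgam (m+1) (by omega)).hom_ext
    · rw [← Category.assoc, ← W.map_comp, IH (m+1) (by omega) b (initSegment (m+1) ≫ φ),
        X.map_comp, ← Category.assoc, ← D.nat_init m, Category.assoc]
    · rw [← Category.assoc, ← W.map_comp, D.nat_hom1 b (lastEdge (m+1) ≫ φ),
        X.map_comp, ← Category.assoc, ← D.nat_last m, Category.assoc]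

end MapData

end Construction
end GrayAux


/-- **Gray tensor products of enriched categories, Lemma 5.5.**
Let `(V, ⊗, I)` be a finitely cocomplete symmetric monoidal closed category equipped with a
cocategory interval, inducing the cosimplicial object `I^•` (realized by `W`).  For any
cosimplicial object `X^•` in `V`, to give a map of cosimplicial objects `f^• : I^• ⟶ X^•` is to
give maps `f⁰ : I ⟶ X⁰` and `f¹ : I¹ ⟶ X¹` with `f¹d⁰ = d⁰f⁰`, `f¹d¹ = d¹f⁰`, `f⁰p = s⁰f¹`,
together with `f² : I² ⟶ X²` such that `f² = (d⁰f¹, d²f¹)` and `f²c = d¹f¹`.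
In particular two maps `f^•, g^• : I^• ⟶ X^•` are equal iff `f⁰ = g⁰` and `f¹ = g¹`. -/
theorem hom_from_interval_cosimplicial
    (V : Type u) [Category.{v} V] [MonoidalCategory V] [SymmetricCategory V]
    [MonoidalClosed V] [HasFiniteColimits V]
    (J : CocategoryInterval V) (W : CosimplicialObject V) (R : Realization J W)
    (X : CosimplicialObject V) :
    (∀ (f0 : 𝟙_ V ⟶ X ^⦋0⦌) (f1 : J.I1 ⟶ X ^⦋1⦌) (f2 : J.I2 ⟶ X ^⦋2⦌),
      J.d0 ≫ f1 = f0 ≫ X.δ (0 : Fin 2) →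
      J.d1 ≫ f1 = f0 ≫ X.δ (1 : Fin 2) →
      J.p ≫ f0 = f1 ≫ X.σ (0 : Fin 1) →
      J.i0 ≫ f2 = f1 ≫ X.δ (0 : Fin 3) →
      J.i1 ≫ f2 = f1 ≫ X.δ (2 : Fin 3) →
      J.c ≫ f2 = f1 ≫ X.δ (1 : Fin 3) →
      ∃ F : W ⟶ X,
        F.app (SimplexCategory.mk 0) = R.e0.hom ≫ f0 ∧
        F.app (SimplexCategory.mk 1) = R.e1.hom ≫ f1 ∧
        F.app (SimplexCategory.mk 2) = R.e2.hom ≫ f2) ∧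
    (∀ F G : W ⟶ X,
      F.app (SimplexCategory.mk 0) = G.app (SimplexCategory.mk 0) →
      F.app (SimplexCategory.mk 1) = G.app (SimplexCategory.mk 1) →
      F = G) := by
  constructor
  · intro f0 f1 f2 h1 h2 h3 h4 h5 h6
    let D : GrayAux.MapData J W R X := ⟨f0, f1, f2, h1, h2, h3, h4, h5, h6⟩
    refine ⟨{ app := fun x => (D.Fc x.len).1,
              naturality := fun x y φ => D.nat_all x.len y.len φ }, rfl, rfl, ?_⟩
    exact GrayAux.MapData.Fc_two D
  · intro F G h0 h1
    apply NatTrans.ext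
    funext x
    induction x using SimplexCategory.rec with
    | mk n =>
    induction n using Nat.strong_induction_on with
    | _ n IH =>
    match n with
    | 0 => exact h0
    | 1 => exact h1
    | (m+2) =>
      apply (R.amalgam (m+1) (by omega)).hom_ext
      · rw [F.naturality (initSegment (m+1)), G.naturality (initSegment (m+1)),
          IH (m+1) (by omega)]
      · rw [F.naturality (lastEdge (m+1)), G.naturality (lastEdge (m+1)), h1]
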